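/- In the defocusing case (all σ_l = 1) with distinct a_1,...,a_N ∈ ℝ and nonzero c_l, if (λ_1, y_1) and (λ_2, y_2) with y_1, y_2 > 0 both satisfy Σ_l c_l²/(a_l² + y²) = 1 and 2λ = Σ_l c_l² a_l/(a_l² + y²) (the stationary-soliton conditions), then y_1 = y_2 and λ_1 = λ_2. Hence the defocusing N-component NLS admits at most one stationary dark soliton family on a fixed background, and no stationary dark–dark bound states exist. -/
import Mathlib

open Finset

lemma sum_strict_mono (N : ℕ) (hN : 0 < N) (a c : Fin N → ℝ) (hc : ∀ l, c l ≠ 0)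
    (y₁ y₂ : ℝ) (hy₁ : 0 < y₁) (h : y₁ ^ 2 < y₂ ^ 2) :
    (∑ l, (c l) ^ 2 / ((a l) ^ 2 + y₂ ^ 2)) < ∑ l, (c l) ^ 2 / ((a l) ^ 2 + y₁ ^ 2) := by
  apply Finset.sum_lt_sum_of_nonempty
  · exact Finset.univ_nonempty_iff.mpr (Fin.pos_iff_nonempty.mp hN)
  · intro l _
    have h1 : (0:ℝ) < (a l) ^ 2 + y₁ ^ 2 := by positivity
    have h2 : (0:ℝ) < (a l) ^ 2 + y₂ ^ 2 := by linarith
    have hcl : (0:ℝ) < (c l) ^ 2 := pow_pos (abs_pos.mpr (hc l)) 2 |>.trans_eq (sq_abs _)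
    exact div_lt_div_of_pos_left hcl h1 (by linarith)

/-- Uniqueness of the stationary dark soliton in the defocusing case: the
stationary-soliton conditions determine `(λ, y)` uniquely. -/
theorem stmt_16 (N : ℕ) (hN : 0 < N) (a c : Fin N → ℝ)
    (ha : Function.Injective a) (hc : ∀ l, c l ≠ 0)
    (lam₁ lam₂ y₁ y₂ : ℝ) (hy₁ : 0 < y₁) (hy₂ : 0 < y₂)
    (h₁ : (∑ l, (c l) ^ 2 / ((a l) ^ 2 + y₁ ^ 2)) = 1)
    (h₁' : 2 * lam₁ = ∑ l, (c l) ^ 2 * a l / ((a l) ^ 2 + y₁ ^ 2))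
    (h₂ : (∑ l, (c l) ^ 2 / ((a l) ^ 2 + y₂ ^ 2)) = 1)
    (h₂' : 2 * lam₂ = ∑ l, (c l) ^ 2 * a l / ((a l) ^ 2 + y₂ ^ 2)) :
    y₁ = y₂ ∧ lam₁ = lam₂ := by
  have hsq : y₁ ^ 2 = y₂ ^ 2 := by
    rcases lt_trichotomy (y₁ ^ 2) (y₂ ^ 2) with h | h | h
    · have := sum_strict_mono N hN a c hc y₁ y₂ hy₁ h
      rw [h₁, h₂] at this; linarith
    · exact h
    · have := sum_strict_mono N hN a c hc y₂ y₁ hy₂ h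
      rw [h₁, h₂] at this; linarith
  have hy : y₁ = y₂ := by
    nlinarith [sq_nonneg (y₁ - y₂), sq_nonneg (y₁ + y₂)]
  refine ⟨hy, ?_⟩
  rw [hy] at h₁'
  linarith [h₁'.trans h₂'.symm]
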